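/- arXiv:1703.03962 — 2 statements merged into one kernel-verified Lean document; each statement's English description precedes it below -/
import Mathlib

section
/- Let (R, m) be a local commutative ring, S a commutative ring, f : R → S a ring homomorphism, and J a proper ideal of S with J ⊆ f(R) ∩ Jac(S). Then the amalgamation R ⋈^f J is a Gaussian ring if and only if R is a Gaussian ring, J² = 0, and f(r)·J = f(r)²·J for every r ∈ m. -/
open Pointwise

/-- The amalgamation `R ⋈^f J` of `R` with `S` along the ideal `J` with respect to
`f : R →+* S`, as a subring of `R × S`. -/
def amalgamation {R S : Type*} [CommRing R] [CommRing S] (f : R →+* S) (J : Ideal S) :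
    Subring (R × S) where
  carrier := {p | ∃ j ∈ J, p.2 = f p.1 + j}
  zero_mem' := ⟨0, J.zero_mem, by simp⟩
  one_mem' := ⟨0, J.zero_mem, by simp⟩
  add_mem' := by
    rintro ⟨a, a'⟩ ⟨b, b'⟩ ⟨j, hj, h1⟩ ⟨k, hk, h2⟩
    exact ⟨j + k, J.add_mem hj hk, by simp_all; ring⟩
  neg_mem' := by
    rintro ⟨a, a'⟩ ⟨j, hj, h1⟩
    exact ⟨-j, J.neg_mem hj, by simp_all; ring⟩
  mul_mem' := by
    rintro ⟨a, a'⟩ ⟨b, b'⟩ ⟨j, hj, h1⟩ ⟨k, hk, h2⟩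
    refine ⟨f a * k + j * f b + j * k, ?_, by simp_all; ring⟩
    exact J.add_mem (J.add_mem (J.mul_mem_left _ hk) (J.mul_mem_right _ hj))
      (J.mul_mem_right _ hj)

/-- The content ideal of a polynomial: the ideal generated by its coefficients. -/
def contentIdeal {A : Type*} [CommRing A] (p : Polynomial A) : Ideal A :=
  Ideal.span (Set.range p.coeff)

/-- A commutative ring is Gaussian if the content ideal is multiplicative. -/
def IsGaussianRing (A : Type*) [CommRing A] : Prop :=
  ∀ p q : Polynomial A, contentIdeal (p * q) = contentIdeal p * contentIdeal q

section ContentAPI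

open Polynomial hiding contentIdeal coeff_mem_contentIdeal contentIdeal_zero

variable {B : Type*} [CommRing B]

lemma coeff_mem_contentIdeal (p : B[X]) (n : ℕ) : p.coeff n ∈ contentIdeal p :=
  Ideal.subset_span ⟨n, rfl⟩

lemma contentIdeal_le_iff {p : B[X]} {I : Ideal B} :
    contentIdeal p ≤ I ↔ ∀ n, p.coeff n ∈ I := by
  rw [contentIdeal, Ideal.span_le, Set.range_subset_iff]
  rfl

lemma contentIdeal_zero : contentIdeal (0 : B[X]) = ⊥ := by
  apply le_bot_iff.1
  rw [contentIdeal_le_iff]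
  intro n
  simp

lemma contentIdeal_mul_le (p q : B[X]) :
    contentIdeal (p * q) ≤ contentIdeal p * contentIdeal q := by
  rw [contentIdeal_le_iff]
  intro n
  rw [coeff_mul]
  exact Ideal.sum_mem _ fun c _ =>
    Ideal.mul_mem_mul (coeff_mem_contentIdeal _ _) (coeff_mem_contentIdeal _ _)

lemma contentIdeal_mul_le_iff {p q : B[X]} {I : Ideal B} :
    contentIdeal p * contentIdeal q ≤ I ↔ ∀ i k, p.coeff i * q.coeff k ∈ I := by
  constructor
  · intro h i k
    exact h (Ideal.mul_mem_mul (coeff_mem_contentIdeal _ _) (coeff_mem_contentIdeal _ _))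
  · intro h
    rw [contentIdeal, contentIdeal, Ideal.span_mul_span', Ideal.span_le]
    rintro x hx
    rw [Set.mem_mul] at hx
    obtain ⟨u, ⟨i, rfl⟩, v, ⟨k, rfl⟩, rfl⟩ := hx
    exact h i k

lemma quad_coeff (u v w : B) (n : ℕ) :
    (C u * X ^ 2 + C v * X + C w).coeff n =
      if n = 2 then u else if n = 1 then v else if n = 0 then w else 0 := by
  rcases n with _ | _ | _ | n <;>
    simp [coeff_add, coeff_C_mul, coeff_X_pow, coeff_C, coeff_X]

lemma contentIdeal_quad (u v w : B) :
    contentIdeal (C u * X ^ 2 + C v * X + C w) = Ideal.span {u, v, w} := by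
  apply le_antisymm
  · rw [contentIdeal_le_iff]
    intro n
    rw [quad_coeff]
    split_ifs
    · exact Ideal.subset_span (by simp)
    · exact Ideal.subset_span (by simp)
    · exact Ideal.subset_span (by simp)
    · exact Ideal.zero_mem _
  · rw [Ideal.span_le]
    rintro x hx
    simp only [Set.mem_insert_iff, Set.mem_singleton_iff] at hx
    rcases hx with rfl | rfl | rfl
    · have h := coeff_mem_contentIdeal (C x * X ^ 2 + C v * X + C w) 2
      rwa [quad_coeff] at h
    · have h := coeff_mem_contentIdeal (C u * X ^ 2 + C x * X + C w) 1
      rwa [quad_coeff] at h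
    · have h := coeff_mem_contentIdeal (C u * X ^ 2 + C v * X + C x) 0
      rwa [quad_coeff] at h

lemma lin_mul_lin (a b c d : B) :
    (C a * X + C b) * (C c * X + C d) =
      C (a * c) * X ^ 2 + C (a * d + b * c) * X + C (b * d) := by
  simp only [map_mul, map_add]
  ring

lemma lin_coeff0 (a b : B) : (C a * X + C b).coeff 0 = b := by simp
lemma lin_coeff1 (a b : B) : (C a * X + C b).coeff 1 = a := by simp

end ContentAPI

section TwoElement

open Polynomial hiding contentIdeal coeff_mem_contentIdeal contentIdeal_zero

variable {B : Type*} [CommRing B]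

/-- Condition (i) of Tsang for local Gaussian rings, in element form. -/
def P1cond (B : Type*) [CommRing B] : Prop :=
  ∀ a b : B, ((∃ w, a * b = w * a ^ 2) ∧ (∃ s, b ^ 2 = s * a ^ 2)) ∨
    ((∃ w, a * b = w * b ^ 2) ∧ (∃ s, a ^ 2 = s * b ^ 2))

/-- Condition (ii) of Tsang, in element form. -/
def P2cond (B : Type*) [CommRing B] : Prop :=
  ∀ a b s : B, a * b = 0 → b ^ 2 = s * a ^ 2 → b ^ 2 = 0

lemma P2_of_gaussian (hG : IsGaussianRing B) : P2cond B := by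
  intro a b s hab hbs
  have h := hG (C (s * a) * X + C b) (C (-b) * X + C a)
  rw [lin_mul_lin] at h
  have h1 : s * a * (-b) = 0 := by linear_combination (-s) * hab
  have h2 : s * a * a + b * (-b) = 0 := by linear_combination -hbs
  have h3 : b * a = 0 := by linear_combination hab
  rw [h1, h2, h3] at h
  have hb : b * (-b) ∈
      contentIdeal (C (s * a) * X + C b) * contentIdeal (C (-b) * X + C a) := by
    apply Ideal.mul_mem_mul
    · have := coeff_mem_contentIdeal (C (s * a) * X + C b) 0
      rwa [lin_coeff0] at this
    · have := coeff_mem_contentIdeal (C (-b) * X + C a) 1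
      rwa [lin_coeff1] at this
  rw [← h] at hb
  have h0 : (C (0 : B) * X ^ 2 + C 0 * X + C 0) = 0 := by simp
  rw [h0, contentIdeal_zero, Ideal.mem_bot] at hb
  linear_combination -hb

lemma E1_of_gaussian (hG : IsGaussianRing B) (a b : B) :
    ∃ x y, a * b = x * a ^ 2 + y * b ^ 2 := by
  have h := hG (C a * X + C b) (C a * X + C (-b))
  rw [lin_mul_lin, contentIdeal_quad] at h
  have hab : b * a ∈ contentIdeal (C a * X + C b) * contentIdeal (C a * X + C (-b)) := by
    apply Ideal.mul_mem_mul
    · have := coeff_mem_contentIdeal (C a * X + C b) 0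
      rwa [lin_coeff0] at this
    · have := coeff_mem_contentIdeal (C a * X + C (-b)) 1
      rwa [lin_coeff1] at this
  rw [← h] at hab
  have hle : (Ideal.span {a * a, a * -b + b * a, b * -b} : Ideal B) ≤
      Ideal.span {a ^ 2, b ^ 2} := by
    rw [Ideal.span_le]
    rintro x hx
    simp only [Set.mem_insert_iff, Set.mem_singleton_iff] at hx
    rcases hx with rfl | rfl | rfl
    · exact Ideal.subset_span (by left; ring)
    · have : a * -b + b * a = 0 := by ring
      rw [this]; exact Ideal.zero_mem _
    · have : b * -b = -(b ^ 2) := by ring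
      rw [this]; exact neg_mem (Ideal.subset_span (by right; rfl))
  have := Ideal.mem_span_pair.1 (hle hab)
  obtain ⟨x, y, hxy⟩ := this
  exact ⟨x, y, by linear_combination -hxy⟩

variable [IsLocalRing B]

lemma nonunit_add {u v : B} (hu : ¬IsUnit u) (hv : ¬IsUnit v) : ¬IsUnit (u + v) :=
  IsLocalRing.nonunits_add hu hv

lemma isUnit_left_of_isUnit_add {u v : B} (h : IsUnit (u + v)) (hv : ¬IsUnit v) :
    IsUnit u := by
  by_contra hu
  exact nonunit_add hu hv h

end TwoElement
section GP1

open Polynomial hiding contentIdeal coeff_mem_contentIdeal contentIdeal_zero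

variable {B : Type*} [CommRing B] [IsLocalRing B]

lemma isUnit_add_of_nonunit {t z : B} (ht : IsUnit t) (hz : ¬IsUnit z) :
    IsUnit (t + z) := by
  by_contra hc
  have hz' : ¬IsUnit (-z) := fun h => hz (by simpa using h.neg)
  have h2 := nonunit_add hc hz'
  rw [show t + z + -z = t by ring] at h2
  exact h2 ht

lemma P1_case2 (hG : IsGaussianRing B) {a b x y : B}
    (hxy : a * b = x * a ^ 2 + y * b ^ 2) (hx : ¬IsUnit x) :
    ((∃ w, a * b = w * a ^ 2) ∧ (∃ s, b ^ 2 = s * a ^ 2)) ∨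
    ((∃ w, a * b = w * b ^ 2) ∧ (∃ s, a ^ 2 = s * b ^ 2)) := by
  have h := hG (C (a - y * b) * X + C b) (C b * X + C (a - y * b))
  rw [lin_mul_lin, contentIdeal_quad] at h
  have hbb : b * b ∈ contentIdeal (C (a - y * b) * X + C b) *
      contentIdeal (C b * X + C (a - y * b)) := by
    apply Ideal.mul_mem_mul
    · have := coeff_mem_contentIdeal (C (a - y * b) * X + C b) 0
      rwa [lin_coeff0] at this
    · have := coeff_mem_contentIdeal (C b * X + C (a - y * b)) 1
      rwa [lin_coeff1] at this
  rw [← h] at hbb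
  have hle : (Ideal.span {(a - y * b) * b, (a - y * b) * (a - y * b) + b * b,
      b * (a - y * b)} : Ideal B) ≤
      Ideal.span {(a - y * b) * b, (a - y * b) * (a - y * b) + b * b} := by
    rw [Ideal.span_le]
    rintro z hz
    simp only [Set.mem_insert_iff, Set.mem_singleton_iff] at hz
    rcases hz with rfl | rfl | rfl
    · exact Ideal.subset_span (by left; rfl)
    · exact Ideal.subset_span (by right; rfl)
    · rw [mul_comm]; exact Ideal.subset_span (by left; rfl)
  obtain ⟨s, t, hst⟩ := Ideal.mem_span_pair.1 (hle hbb)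
  have hEQ1 : (1 - t * (1 - y ^ 2)) * b ^ 2 = (s * x + t * (1 - 2 * x * y)) * a ^ 2 := by
    linear_combination (s - 2 * t * y) * hxy - hst
  rcases IsLocalRing.isUnit_or_isUnit_one_sub_self (t * (1 - y ^ 2)) with hu | hu
  · have ht : IsUnit t := isUnit_of_mul_isUnit_left hu
    have hα : IsUnit (s * x + t * (1 - 2 * x * y)) := by
      have hxz : ¬IsUnit (s * x - 2 * t * x * y) := by
        intro hc
        apply hx
        rw [show s * x - 2 * t * x * y = x * (s - 2 * t * y) by ring] at hc
        exact isUnit_of_mul_isUnit_left hc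
      rw [show s * x + t * (1 - 2 * x * y) = t + (s * x - 2 * t * x * y) by ring]
      exact isUnit_add_of_nonunit ht hxz
    obtain ⟨v, hv⟩ := hα.exists_left_inv
    right
    have ha2 : a ^ 2 = (v * (1 - t * (1 - y ^ 2))) * b ^ 2 := by
      linear_combination (-v) * hEQ1 - a ^ 2 * hv
    exact ⟨⟨x * (v * (1 - t * (1 - y ^ 2))) + y, by linear_combination hxy + x * ha2⟩,
      ⟨_, ha2⟩⟩
  · obtain ⟨v, hv⟩ := hu.exists_left_inv
    left
    have hb2 : b ^ 2 = (v * (s * x + t * (1 - 2 * x * y))) * a ^ 2 := by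
      linear_combination v * hEQ1 - b ^ 2 * hv
    exact ⟨⟨x + y * (v * (s * x + t * (1 - 2 * x * y))), by
      linear_combination hxy + y * hb2⟩, ⟨_, hb2⟩⟩

lemma P1_case4 (hG : IsGaussianRing B) {a b x y : B}
    (hxy : a * b = x * a ^ 2 + y * b ^ 2) (hx : IsUnit x) (hy : IsUnit y) :
    ((∃ w, a * b = w * a ^ 2) ∧ (∃ s, b ^ 2 = s * a ^ 2)) ∨
    ((∃ w, a * b = w * b ^ 2) ∧ (∃ s, a ^ 2 = s * b ^ 2)) := by
  have h := hG (C (x * a) * X + C (y * b)) (C b * X + C a)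
  rw [lin_mul_lin, contentIdeal_quad] at h
  have hle : (Ideal.span {x * a * b, x * a * a + y * b * b, y * b * a} : Ideal B) ≤
      Ideal.span {a * b} := by
    rw [Ideal.span_le]
    rintro z hz
    simp only [Set.mem_insert_iff, Set.mem_singleton_iff] at hz
    rcases hz with rfl | rfl | rfl
    · exact Ideal.mem_span_singleton'.2 ⟨x, by ring⟩
    · exact Ideal.mem_span_singleton'.2 ⟨1, by linear_combination hxy⟩
    · exact Ideal.mem_span_singleton'.2 ⟨y, by ring⟩
  have hda : x * a * a ∈ contentIdeal (C (x * a) * X + C (y * b)) *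
      contentIdeal (C b * X + C a) := by
    apply Ideal.mul_mem_mul
    · have := coeff_mem_contentIdeal (C (x * a) * X + C (y * b)) 1
      rwa [lin_coeff1] at this
    · have := coeff_mem_contentIdeal (C b * X + C a) 0
      rwa [lin_coeff0] at this
  have heb : y * b * b ∈ contentIdeal (C (x * a) * X + C (y * b)) *
      contentIdeal (C b * X + C a) := by
    apply Ideal.mul_mem_mul
    · have := coeff_mem_contentIdeal (C (x * a) * X + C (y * b)) 0
      rwa [lin_coeff0] at this
    · have := coeff_mem_contentIdeal (C b * X + C a) 1
      rwa [lin_coeff1] at this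
  rw [← h] at hda heb
  obtain ⟨d, hd⟩ := Ideal.mem_span_singleton'.1 (hle hda)
  obtain ⟨e, he⟩ := Ideal.mem_span_singleton'.1 (hle heb)
  have habe : (1 - (d + e)) * (a * b) = 0 := by linear_combination hxy - hd - he
  obtain ⟨vx, hvx⟩ := hx.exists_left_inv
  obtain ⟨vy, hvy⟩ := hy.exists_left_inv
  rcases IsLocalRing.isUnit_or_isUnit_one_sub_self (d + e) with hde | hde
  · by_cases hd' : IsUnit d
    · obtain ⟨vd, hvd⟩ := hd'.exists_left_inv
      left
      have hab' : a * b = (vd * x) * a ^ 2 := by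
        linear_combination vd * hd - (a * b) * hvd
      have hb2 : b ^ 2 = (vy * e * (vd * x)) * a ^ 2 := by
        linear_combination (-vy) * he + vy * e * hab' - b ^ 2 * hvy
      exact ⟨⟨vd * x, hab'⟩, ⟨_, hb2⟩⟩
    · have he' : IsUnit e := by
        rw [add_comm] at hde
        exact isUnit_left_of_isUnit_add hde hd'
      obtain ⟨ve, hve⟩ := he'.exists_left_inv
      right
      have hab' : a * b = (ve * y) * b ^ 2 := by
        linear_combination ve * he - (a * b) * hve
      have ha2 : a ^ 2 = (vx * d * (ve * y)) * b ^ 2 := by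
        linear_combination (-vx) * hd + vx * d * hab' - a ^ 2 * hvx
      exact ⟨⟨ve * y, hab'⟩, ⟨_, ha2⟩⟩
  · obtain ⟨v, hv⟩ := hde.exists_left_inv
    have hab0 : a * b = 0 := by linear_combination v * habe - (a * b) * hv
    have ha20 : a ^ 2 = 0 := by linear_combination (-vx) * hd + vx * d * hab0 - a ^ 2 * hvx
    have hb20 : b ^ 2 = 0 := by linear_combination (-vy) * he + vy * e * hab0 - b ^ 2 * hvy
    exact Or.inl ⟨⟨0, by linear_combination hab0⟩, ⟨0, by linear_combination hb20⟩⟩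

lemma P1_of_gaussian (hG : IsGaussianRing B) : P1cond B := by
  intro a b
  obtain ⟨x, y, hxy⟩ := E1_of_gaussian hG a b
  by_cases hx : IsUnit x
  · by_cases hy : IsUnit y
    · exact P1_case4 hG hxy hx hy
    · rcases P1_case2 hG (a := b) (b := a) (x := y) (y := x)
        (by linear_combination hxy) hy with ⟨⟨w, hw⟩, hs⟩ | ⟨⟨w, hw⟩, hs⟩
      · exact Or.inr ⟨⟨w, by linear_combination hw⟩, hs⟩
      · exact Or.inl ⟨⟨w, by linear_combination hw⟩, hs⟩
  · exact P1_case2 hG hxy hx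

end GP1
section TsangCore

open Polynomial hiding contentIdeal coeff_mem_contentIdeal contentIdeal_zero

variable {B : Type*} [CommRing B]

/-- The square-domination preorder. -/
def Ge (a b : B) : Prop := (∃ w, a * b = w * a ^ 2) ∧ (∃ s, b ^ 2 = s * a ^ 2)

lemma Ge_refl (a : B) : Ge a a := ⟨⟨1, by ring⟩, ⟨1, by ring⟩⟩

lemma P1_total (h1 : P1cond B) (a b : B) : Ge a b ∨ Ge b a := by
  rcases h1 a b with ⟨⟨w, hw⟩, hs⟩ | ⟨⟨w, hw⟩, hs⟩
  · exact Or.inl ⟨⟨w, hw⟩, hs⟩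
  · exact Or.inr ⟨⟨w, by linear_combination hw⟩, hs⟩

lemma Ge_trans (h1 : P1cond B) {a b c : B} (hab : Ge a b) (hbc : Ge b c) : Ge a c := by
  obtain ⟨⟨α, hα⟩, ⟨β, hβ⟩⟩ := hab
  obtain ⟨⟨γ, hγ⟩, ⟨δ, hδ⟩⟩ := hbc
  have hc2 : c ^ 2 = (δ * β) * a ^ 2 := by linear_combination hδ + δ * hβ
  refine ⟨?_, ⟨δ * β, hc2⟩⟩
  rcases P1_total h1 a c with ⟨⟨w, hw⟩, _⟩ | ⟨⟨w, hw⟩, _⟩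
  · exact ⟨w, hw⟩
  · exact ⟨w * (δ * β), by linear_combination hw + w * hc2⟩

lemma exists_Ge_max (h1 : P1cond B) (s : Finset B) (hs : s.Nonempty) :
    ∃ a ∈ s, ∀ b ∈ s, Ge a b := by
  classical
  induction s using Finset.induction_on with
  | empty => exact absurd hs (by simp)
  | @insert _c _s' hcs IH =>
    by_cases hs' : _s'.Nonempty
    · obtain ⟨a, has', hmax⟩ := IH hs'
      rcases P1_total h1 _c a with hca | hac
      · refine ⟨_c, Finset.mem_insert_self _ _, fun b hb => ?_⟩
        rcases Finset.mem_insert.1 hb with rfl | hb'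
        · exact Ge_refl _
        · exact Ge_trans h1 hca (hmax b hb')
      · refine ⟨a, Finset.mem_insert_of_mem has', fun b hb => ?_⟩
        rcases Finset.mem_insert.1 hb with rfl | hb'
        · exact hac
        · exact hmax b hb'
    · rw [Finset.not_nonempty_iff_eq_empty] at hs'
      subst hs'
      refine ⟨_c, Finset.mem_insert_self _ _, fun b hb => ?_⟩
      rcases Finset.mem_insert.1 hb with rfl | hb'
      · exact Ge_refl _
      · exact absurd hb' (by simp)

lemma contentIdeal_fg (p : B[X]) : (contentIdeal p).FG := by
  classical
  refine ⟨insert 0 (p.support.image p.coeff), ?_⟩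
  apply le_antisymm
  · rw [Ideal.span_le]
    rintro x hx
    simp only [Finset.coe_insert, Set.mem_insert_iff, Finset.coe_image,
      Set.mem_image, Finset.mem_coe] at hx
    rcases hx with rfl | ⟨i, _, rfl⟩
    · exact (contentIdeal p).zero_mem
    · exact coeff_mem_contentIdeal p i
  · rw [contentIdeal_le_iff]
    intro n
    by_cases hn : n ∈ p.support
    · exact Ideal.subset_span (by
        simp only [Finset.coe_insert, Set.mem_insert_iff, Finset.coe_image, Set.mem_image,
          Finset.mem_coe]
        exact Or.inr ⟨n, hn, rfl⟩)
    · rw [Polynomial.notMem_support_iff.1 hn]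
      exact Ideal.zero_mem _

end TsangCore
section E4

open Polynomial hiding contentIdeal coeff_mem_contentIdeal contentIdeal_zero

variable {B : Type*} [CommRing B] [IsLocalRing B]

omit [IsLocalRing B] in
lemma mul_monomial_coeff_mem (α : B[X]) (d : ℕ) (c : B) (n : ℕ) :
    (α * monomial d c).coeff n ∈ Ideal.span {c} := by
  rw [coeff_mul]
  apply Ideal.sum_mem
  rintro ⟨i, k⟩ _
  simp only [coeff_monomial]
  split_ifs
  · exact Ideal.mem_span_singleton'.2 ⟨α.coeff i, rfl⟩
  · rw [mul_zero]; exact Ideal.zero_mem _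

lemma content_le_content_mul_of_unit_coeff {α : B[X]} {j : ℕ}
    (hj : IsUnit (α.coeff j)) (hmax : ∀ i, j < i → ¬IsUnit (α.coeff i)) :
    ∀ β : B[X], contentIdeal β ≤ contentIdeal (α * β) := by
  suffices H : ∀ (n : ℕ) (β : B[X]), β.natDegree ≤ n →
      contentIdeal β ≤ contentIdeal (α * β) by
    intro β; exact H β.natDegree β le_rfl
  intro n
  induction n using Nat.strong_induction_on with
  | _ n IH =>
    intro β hβn
    by_cases hβ0 : β = 0
    · rw [hβ0, contentIdeal_zero]; exact bot_le
    set d := β.natDegree with hd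
    set m : Ideal B := IsLocalRing.maximalIdeal B with hm
    -- Key 1 : the leading coefficient
    have hjd : β.coeff d ∈ contentIdeal (α * β) ⊔ m • contentIdeal β := by
      have hmem : (j, d) ∈ Finset.HasAntidiagonal.antidiagonal (j + d) := by simp
      have hsplit : α.coeff j * β.coeff d =
          (α * β).coeff (j + d) -
            ∑ x ∈ (Finset.HasAntidiagonal.antidiagonal (j + d)).erase (j, d),
              α.coeff x.1 * β.coeff x.2 := by
        rw [coeff_mul, ← Finset.add_sum_erase _ _ hmem]
        ring
      have hrest : ∑ x ∈ (Finset.HasAntidiagonal.antidiagonal (j + d)).erase (j, d),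
          α.coeff x.1 * β.coeff x.2 ∈ m • contentIdeal β := by
        apply Submodule.sum_mem
        rintro ⟨i, k⟩ hik
        rw [Finset.mem_erase, Finset.HasAntidiagonal.mem_antidiagonal] at hik
        obtain ⟨hne, hsum⟩ := hik
        rcases lt_trichotomy k d with hk | rfl | hk
        · have hi : j < i := by omega
          have hαi : α.coeff i ∈ m := by
            rw [hm, IsLocalRing.mem_maximalIdeal]
            exact hmax i hi
          have := Submodule.smul_mem_smul hαi (coeff_mem_contentIdeal β k)
          simpa using this
        · exfalso; apply hne
          have : i = j := by omega
          rw [this]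
        · rw [coeff_eq_zero_of_natDegree_lt hk, mul_zero]
          exact Submodule.zero_mem _
      obtain ⟨v, hv⟩ := hj.exists_left_inv
      have h1 : α.coeff j * β.coeff d ∈ contentIdeal (α * β) ⊔ m • contentIdeal β := by
        rw [hsplit]
        exact sub_mem (Ideal.mem_sup_left (coeff_mem_contentIdeal _ _))
          (Ideal.mem_sup_right hrest)
      have h2 : β.coeff d = v * (α.coeff j * β.coeff d) := by
        linear_combination (-(β.coeff d)) * hv
      rw [h2]
      exact Ideal.mul_mem_left _ v h1
    -- induction step via eraseLead
    have hIH : contentIdeal β.eraseLead ≤ contentIdeal (α * β.eraseLead) := by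
      rcases Polynomial.eraseLead_natDegree_lt_or_eraseLead_eq_zero β with hlt | hEL
      · exact IH β.eraseLead.natDegree (by omega) β.eraseLead le_rfl
      · rw [hEL, contentIdeal_zero]; exact bot_le
    have hkey3 : contentIdeal (α * β.eraseLead) ≤
        contentIdeal (α * β) ⊔ Ideal.span {β.coeff d} := by
      have hid : α * β.eraseLead = α * β - α * monomial d (β.coeff d) := by
        have h := Polynomial.eraseLead_add_monomial_natDegree_leadingCoeff β
        rw [Polynomial.leadingCoeff, ← hd] at h
        linear_combination α * h
      rw [contentIdeal_le_iff]
      intro k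
      rw [hid, coeff_sub]
      exact sub_mem (Ideal.mem_sup_left (coeff_mem_contentIdeal _ _))
        (Ideal.mem_sup_right (mul_monomial_coeff_mem _ _ _ _))
    have hspan : Ideal.span {β.coeff d} ≤ contentIdeal (α * β) ⊔ m • contentIdeal β := by
      rw [Ideal.span_le]
      rintro x hx
      rw [Set.mem_singleton_iff] at hx
      subst hx
      exact hjd
    have hcβ : contentIdeal β ≤ contentIdeal (α * β) ⊔ m • contentIdeal β := by
      rw [contentIdeal_le_iff]
      intro k
      by_cases hkd : k = d
      · subst hkd; exact hjd
      · have h0 : β.coeff k ∈ contentIdeal β.eraseLead := by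
          rw [← Polynomial.eraseLead_coeff_of_ne k hkd]
          exact coeff_mem_contentIdeal _ _
        have h2 := hkey3 (hIH h0)
        exact (sup_le le_sup_left hspan) h2
    exact Submodule.le_of_le_smul_of_le_jacobson_bot (contentIdeal_fg β)
      (IsLocalRing.maximalIdeal_le_jacobson ⊥) hcβ

end E4
section TsangMain

open Polynomial hiding contentIdeal coeff_mem_contentIdeal contentIdeal_zero

variable {B : Type*} [CommRing B] [IsLocalRing B]

omit [IsLocalRing B] in
lemma mul_mem_span_of_forall {T : Set B} {x r : B} (hx : x ∈ Ideal.span T) {I : Ideal B}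
    (h : ∀ t ∈ T, r * t ∈ I) : r * x ∈ I := by
  induction hx using Submodule.span_induction with
  | mem t ht => exact h t ht
  | zero => rw [mul_zero]; exact I.zero_mem
  | add u v _ _ hu hv => rw [mul_add]; exact I.add_mem hu hv
  | smul c u _ hu => rw [smul_eq_mul, mul_left_comm]; exact I.mul_mem_left c hu

lemma tsang_half (h1 : P1cond B) (h2 : P2cond B) (f g : B[X]) {a : B}
    (ha2 : a ^ 2 ≠ 0)
    (hGf : ∀ i, Ge a (f.coeff i)) (hGg : ∀ k, Ge a (g.coeff k))
    (i₀ : ℕ) (hi₀ : f.coeff i₀ = a) :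
    ∀ i k, f.coeff i * g.coeff k ∈ contentIdeal (f * g) := by
  classical
  choose wf hwf using fun i => (hGf i).1
  choose wg hwg using fun k => (hGg k).1
  have hFa : ∀ i, a * (f.coeff i - wf i * a) = 0 := fun i => by linear_combination hwf i
  have hGa : ∀ k, a * (g.coeff k - wg k * a) = 0 := fun k => by linear_combination hwg k
  have hsq : ∀ u : B, a * u = 0 → u ^ 2 = 0 := by
    intro u hu
    rcases h1 a u with ⟨_, s, hs⟩ | ⟨_, s, hs⟩
    · exact h2 a u s hu hs
    · exact absurd (h2 u a s (by linear_combination hu) hs) ha2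
  have hcross : ∀ u v : B, u ^ 2 = 0 → v ^ 2 = 0 → u * v = 0 := by
    intro u v hu hv
    rcases h1 u v with ⟨⟨w, hw⟩, _⟩ | ⟨⟨w, hw⟩, _⟩
    · rw [hw, hu, mul_zero]
    · rw [hw, hv, mul_zero]
  set α : B[X] := ∑ i ∈ f.support, monomial i (wf i) with hα
  set β : B[X] := ∑ k ∈ g.support, monomial k (wg k) with hβ
  have hαc : ∀ i, α.coeff i = if i ∈ f.support then wf i else 0 := by
    intro i
    rw [hα, finset_sum_coeff]
    simp only [coeff_monomial]
    exact Finset.sum_ite_eq' f.support i wf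
  have hβc : ∀ k, β.coeff k = if k ∈ g.support then wg k else 0 := by
    intro k
    rw [hβ, finset_sum_coeff]
    simp only [coeff_monomial]
    exact Finset.sum_ite_eq' g.support k wg
  have hkey : ∀ i k, f.coeff i * g.coeff k = a ^ 2 * (α.coeff i * β.coeff k) := by
    intro i k
    by_cases hi : i ∈ f.support
    · by_cases hk : k ∈ g.support
      · rw [hαc, hβc, if_pos hi, if_pos hk]
        have h1' := hFa i
        have h2' := hGa k
        have h3' := hcross _ _ (hsq _ (hFa i)) (hsq _ (hGa k))
        linear_combination (wf i) * h2' + (wg k) * h1' + h3'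
      · rw [notMem_support_iff.1 hk, hβc, if_neg hk]; ring
    · rw [notMem_support_iff.1 hi, hαc, if_neg hi]; ring
  have hi₀s : i₀ ∈ f.support := by
    rw [mem_support_iff, hi₀]
    intro h; apply ha2; rw [h]; ring
  have hwu : IsUnit (wf i₀) := by
    have h := hwf i₀
    rw [hi₀] at h
    rcases IsLocalRing.isUnit_or_isUnit_one_sub_self (wf i₀) with hu | hu
    · exact hu
    · exfalso
      obtain ⟨v, hv⟩ := hu.exists_left_inv
      exact ha2 (by linear_combination v * h - a ^ 2 * hv)
  have hexj : ∃ j, IsUnit (α.coeff j) ∧ ∀ i, j < i → ¬IsUnit (α.coeff i) := by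
    set T : Finset ℕ :=
      (Finset.range (α.natDegree + 1)).filter (fun i => IsUnit (α.coeff i)) with hT
    have hαi₀ : IsUnit (α.coeff i₀) := by rw [hαc, if_pos hi₀s]; exact hwu
    have hne : T.Nonempty := by
      refine ⟨i₀, ?_⟩
      rw [hT, Finset.mem_filter, Finset.mem_range]
      refine ⟨?_, hαi₀⟩
      have h1' : α.coeff i₀ ≠ 0 := hαi₀.ne_zero
      have := le_natDegree_of_ne_zero h1'
      omega
    refine ⟨T.max' hne, ?_, ?_⟩
    · exact (Finset.mem_filter.1 (T.max'_mem hne)).2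
    · intro i hi hui
      have hile : i ∈ T := by
        rw [hT, Finset.mem_filter, Finset.mem_range]
        refine ⟨?_, hui⟩
        have := le_natDegree_of_ne_zero hui.ne_zero
        omega
      have := T.le_max' i hile
      omega
  obtain ⟨j, hju, hjmax⟩ := hexj
  have hE4 := content_le_content_mul_of_unit_coeff hju hjmax β
  intro i k
  rw [hkey i k]
  have hx : α.coeff i * β.coeff k ∈ contentIdeal (α * β) :=
    hE4 (Ideal.mul_mem_left _ _ (coeff_mem_contentIdeal β k))
  have hcc : ∀ n, (f * g).coeff n = a ^ 2 * ((α * β).coeff n) := by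
    intro n
    rw [coeff_mul, coeff_mul, Finset.mul_sum]
    exact Finset.sum_congr rfl fun x _ => hkey x.1 x.2
  exact mul_mem_span_of_forall hx (by
    rintro t ⟨n, rfl⟩
    rw [← hcc n]
    exact coeff_mem_contentIdeal _ _)

theorem gaussian_of_P1_P2 (h1 : P1cond B) (h2 : P2cond B) : IsGaussianRing B := by
  intro p q
  refine le_antisymm (contentIdeal_mul_le p q) ?_
  rw [contentIdeal_mul_le_iff]
  classical
  set s : Finset B := insert 0 (p.support.image p.coeff ∪ q.support.image q.coeff) with hs
  obtain ⟨a, has, hamax⟩ := exists_Ge_max h1 s ⟨0, by simp [hs]⟩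
  have hGp : ∀ i, Ge a (p.coeff i) := by
    intro i
    by_cases hi : i ∈ p.support
    · exact hamax _ (by
        rw [hs]
        exact Finset.mem_insert_of_mem
          (Finset.mem_union_left _ (Finset.mem_image_of_mem _ hi)))
    · rw [notMem_support_iff.1 hi]
      exact ⟨⟨0, by ring⟩, ⟨0, by ring⟩⟩
  have hGq : ∀ k, Ge a (q.coeff k) := by
    intro k
    by_cases hk : k ∈ q.support
    · exact hamax _ (by
        rw [hs]
        exact Finset.mem_insert_of_mem
          (Finset.mem_union_right _ (Finset.mem_image_of_mem _ hk)))
    · rw [notMem_support_iff.1 hk]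
      exact ⟨⟨0, by ring⟩, ⟨0, by ring⟩⟩
  by_cases h0 : a ^ 2 = 0
  · intro i k
    have hu2 : (p.coeff i) ^ 2 = 0 := by
      obtain ⟨_, s', hs'⟩ := hGp i
      rw [hs', h0, mul_zero]
    have hv2 : (q.coeff k) ^ 2 = 0 := by
      obtain ⟨_, s', hs'⟩ := hGq k
      rw [hs', h0, mul_zero]
    have hz : p.coeff i * q.coeff k = 0 := by
      rcases h1 (p.coeff i) (q.coeff k) with ⟨⟨w, hw⟩, _⟩ | ⟨⟨w, hw⟩, _⟩
      · rw [hw, hu2, mul_zero]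
      · rw [hw, hv2, mul_zero]
    rw [hz]
    exact Ideal.zero_mem _
  · have has' := has
    rw [hs, Finset.mem_insert] at has'
    rcases has' with rfl | hmem
    · exact absurd (by ring) h0
    rw [Finset.mem_union] at hmem
    rcases hmem with hmem | hmem
    · obtain ⟨i₀, _, hi₀⟩ := Finset.mem_image.1 hmem
      exact tsang_half h1 h2 p q h0 hGp hGq i₀ hi₀
    · obtain ⟨k₀, _, hk₀⟩ := Finset.mem_image.1 hmem
      intro i k
      have h := tsang_half h1 h2 q p h0 hGq hGp k₀ hk₀ k i
      rw [mul_comm q p] at h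
      rwa [mul_comm (p.coeff i)]

end TsangMain
section Transfer

open Polynomial hiding contentIdeal coeff_mem_contentIdeal contentIdeal_zero

lemma contentIdeal_map {B C : Type*} [CommRing B] [CommRing C] (φ : B →+* C)
    (p : B[X]) :
    contentIdeal (p.map φ) = Ideal.map φ (contentIdeal p) := by
  rw [contentIdeal, contentIdeal, Ideal.map_span]
  congr 1
  ext x
  constructor
  · rintro ⟨n, rfl⟩
    exact ⟨p.coeff n, ⟨n, rfl⟩, (coeff_map φ n).symm⟩
  · rintro ⟨y, ⟨n, rfl⟩, rfl⟩
    exact ⟨n, coeff_map φ n⟩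

lemma isGaussian_of_surjective {B C : Type*} [CommRing B] [CommRing C] (φ : B →+* C)
    (hφ : Function.Surjective φ) (hG : IsGaussianRing B) : IsGaussianRing C := by
  intro p q
  obtain ⟨P, rfl⟩ := Polynomial.map_surjective φ hφ p
  obtain ⟨Q, rfl⟩ := Polynomial.map_surjective φ hφ q
  rw [← Polynomial.map_mul, contentIdeal_map φ, contentIdeal_map φ, contentIdeal_map φ,
    hG, Ideal.map_mul]

end Transfer

section AmalgBasic

variable {R S : Type*} [CommRing R] [CommRing S] (f : R →+* S) (J : Ideal S)

/-- Constructor for elements of the amalgamation. -/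
def amk (r : R) (j : S) (hj : j ∈ J) : amalgamation f J :=
  ⟨(r, f r + j), ⟨j, hj, rfl⟩⟩

lemma amalg_snd_eq (x : amalgamation f J) :
    ∃ j ∈ J, (x : R × S).2 = f (x : R × S).1 + j := x.2

lemma amalg_ext {x y : amalgamation f J}
    (h1 : (x : R × S).1 = (y : R × S).1) (h2 : (x : R × S).2 = (y : R × S).2) : x = y := by
  apply Subtype.ext
  exact Prod.ext h1 h2

@[simp] lemma amalg_coe_mul (x y : amalgamation f J) :
    ((x * y : amalgamation f J) : R × S) = (x : R × S) * (y : R × S) := rfl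

@[simp] lemma amalg_coe_pow (x : amalgamation f J) (n : ℕ) :
    ((x ^ n : amalgamation f J) : R × S) = (x : R × S) ^ n := by
  induction n with
  | zero => rfl
  | succ n ih => rw [pow_succ, pow_succ, ← ih]; rfl

lemma isUnit_of_fst_isUnit (hJjac : J ≤ Ideal.jacobson (⊥ : Ideal S))
    {x : amalgamation f J} (hx : IsUnit ((x : R × S).1)) : IsUnit x := by
  obtain ⟨j, hj, hxeq⟩ := amalg_snd_eq f J x
  obtain ⟨v, hv⟩ := hx.exists_left_inv
  have hfv : f v * f ((x : R × S).1) = 1 := by rw [← map_mul, hv, map_one]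
  have hfu : IsUnit (f ((x : R × S).1)) := IsUnit.of_mul_eq_one _ (mul_comm (f v) _ ▸ hfv)
  obtain ⟨u, hu⟩ := hfu.exists_left_inv
  have hju : IsUnit (j * u + 1) := Ideal.mem_jacobson_bot.1 (hJjac hj) u
  have hs : IsUnit ((x : R × S).2) := by
    have heq : (x : R × S).2 = (j * u + 1) * f ((x : R × S).1) := by
      linear_combination hxeq - j * hu
    rw [heq]
    exact hju.mul hfu
  obtain ⟨w, hw⟩ := hs.exists_left_inv
  have hj' : w - f v ∈ J := by
    have heq : w - f v = (-(w * f v)) * j := by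
      linear_combination f v * hw - w * hfv - w * f v * hxeq
    rw [heq]
    exact J.mul_mem_left _ hj
  refine IsUnit.of_mul_eq_one (a := x) ⟨(v, w), ⟨w - f v, hj', by simp⟩⟩ ?_
  apply amalg_ext f J
  · show (x : R × S).1 * v = 1
    rw [mul_comm]; exact hv
  · show (x : R × S).2 * w = 1
    rw [mul_comm]; exact hw

lemma amalg_isLocal [IsLocalRing R] (hJjac : J ≤ Ideal.jacobson (⊥ : Ideal S)) :
    IsLocalRing (amalgamation f J) := by
  haveI : Nontrivial (amalgamation f J) := by
    refine ⟨⟨0, 1, fun h => ?_⟩⟩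
    have h1 := congrArg (fun z : amalgamation f J => (z : R × S).1) h
    have : ((0 : amalgamation f J) : R × S).1 = 0 := rfl
    have h2 : ((1 : amalgamation f J) : R × S).1 = 1 := rfl
    rw [this, h2] at h1
    exact zero_ne_one h1
  apply IsLocalRing.of_isUnit_or_isUnit_one_sub_self
  intro x
  rcases IsLocalRing.isUnit_or_isUnit_one_sub_self ((x : R × S).1) with h | h
  · exact Or.inl (isUnit_of_fst_isUnit f J hJjac h)
  · right
    apply isUnit_of_fst_isUnit f J hJjac
    have heq : ((1 - x : amalgamation f J) : R × S).1 = 1 - (x : R × S).1 := rfl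
    rwa [heq]

/-- First projection of the amalgamation. -/
def amalgFst : amalgamation f J →+* R :=
  (RingHom.fst R S).comp (amalgamation f J).subtype

lemma amalgFst_surjective : Function.Surjective (amalgFst f J) :=
  fun r => ⟨amk f J r 0 J.zero_mem, rfl⟩

end AmalgBasic
section AmalgP

variable {R S : Type*} [CommRing R] [CommRing S] {f : R →+* S} {J : Ideal S}

lemma amalg_eq_iff {x y : amalgamation f J} :
    x = y ↔ (x : R × S).1 = (y : R × S).1 ∧ (x : R × S).2 = (y : R × S).2 := by
  constructor
  · rintro rfl; exact ⟨rfl, rfl⟩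
  · rintro ⟨h1, h2⟩; exact amalg_ext f J h1 h2

lemma star_elem [IsLocalRing R]
    (hstar : ∀ r ∈ IsLocalRing.maximalIdeal R, f r • J = (f r) ^ 2 • J)
    (r : R) {j : S} (hj : j ∈ J) : ∃ j' ∈ J, f r * j = (f r) ^ 2 * j' := by
  by_cases hr : r ∈ IsLocalRing.maximalIdeal R
  · have h := hstar r hr
    have hmem : f r * j ∈ f r • J := by
      rw [← smul_eq_mul]
      exact Submodule.smul_mem_pointwise_smul _ _ _ hj
    rw [h, ← SetLike.mem_coe, Submodule.coe_pointwise_smul] at hmem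
    obtain ⟨j', hj', hq⟩ := Set.mem_smul_set.1 hmem
    exact ⟨j', hj', by rw [← hq, smul_eq_mul]⟩
  · have hu : IsUnit r := by
      by_contra hc
      exact hr ((IsLocalRing.mem_maximalIdeal r).2 hc)
    obtain ⟨v, hv⟩ := (hu.map f).exists_left_inv
    refine ⟨v * j, J.mul_mem_left v hj, ?_⟩
    linear_combination (-(f r * j)) * hv

variable [IsLocalRing R]

lemma Ge_amalg (hJJ : J * J = ⊥)
    (hstar : ∀ r ∈ IsLocalRing.maximalIdeal R, f r • J = (f r) ^ 2 • J)
    (x y : amalgamation f J) {w s : R}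
    (hw : (x : R × S).1 * (y : R × S).1 = w * (x : R × S).1 ^ 2)
    (hs : (y : R × S).1 ^ 2 = s * (x : R × S).1 ^ 2) :
    (∃ W, x * y = W * x ^ 2) ∧ (∃ T, y ^ 2 = T * x ^ 2) := by
  have jmul : ∀ {u v : S}, u ∈ J → v ∈ J → u * v = 0 := by
    intro u v hu hv
    have := Ideal.mul_mem_mul hu hv
    rwa [hJJ, Ideal.mem_bot] at this
  obtain ⟨jx, hjx, hxeq⟩ := amalg_snd_eq f J x
  obtain ⟨jy, hjy, hyeq⟩ := amalg_snd_eq f J y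
  set a := (x : R × S).1 with ha
  set b := (y : R × S).1 with hb
  -- star elements
  obtain ⟨j₁, hj₁m, hj₁⟩ := star_elem hstar a hjy
  obtain ⟨j₂, hj₂m, hj₂⟩ := star_elem hstar b hjx
  obtain ⟨j₃, hj₃m, hj₃⟩ := star_elem hstar (w * a) hjx
  obtain ⟨j₄, hj₄m, hj₄⟩ := star_elem hstar b hjy
  obtain ⟨j₅, hj₅m, hj₅⟩ := star_elem hstar (s * a) hjx
  have hfw : f a * f b = f w * f a ^ 2 := by
    rw [← map_pow, ← map_mul, ← map_mul, hw]
  have hfs : f b ^ 2 = f s * f a ^ 2 := by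
    rw [← map_pow, ← map_pow, ← map_mul, hs]
  rw [map_mul] at hj₃ hj₅
  constructor
  · refine ⟨amk f J w (j₁ + f s * j₂ - 2 * ((f w) ^ 2 * j₃))
      (J.sub_mem (J.add_mem hj₁m (J.mul_mem_left _ hj₂m)) (J.mul_mem_left 2 (J.mul_mem_left _ hj₃m))), ?_⟩
    rw [pow_two x]
    apply amalg_ext f J
    · show a * b = w * (a * a)
      linear_combination hw
    · show (x : R × S).2 * (y : R × S).2 =
        (f w + (j₁ + f s * j₂ - 2 * ((f w) ^ 2 * j₃))) * ((x : R × S).2 * (x : R × S).2)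
      rw [hxeq, hyeq]
      have z1 : jx * jy = 0 := jmul hjx hjy
      have z2 : jx * jx = 0 := jmul hjx hjx
      have z3 : j₁ * jx = 0 := jmul hj₁m hjx
      have z4 : j₂ * jx = 0 := jmul hj₂m hjx
      have z5 : j₃ * jx = 0 := jmul hj₃m hjx
      linear_combination hfw + hj₁ + hj₂ + j₂ * hfs - 2 * hj₃ + z1 +
        (-(f w) - j₁ - f s * j₂ + 2 * (f w) ^ 2 * j₃) * z2 - 2 * (f a) * z3 -
        2 * (f s * f a) * z4 + 4 * ((f w) ^ 2 * (f a)) * z5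
  · refine ⟨amk f J s (2 * (f s * j₄) - 2 * ((f s) ^ 2 * j₅))
      (J.sub_mem (J.mul_mem_left 2 (J.mul_mem_left _ hj₄m)) (J.mul_mem_left 2 (J.mul_mem_left _ hj₅m))), ?_⟩
    rw [pow_two y, pow_two x]
    apply amalg_ext f J
    · show b * b = s * (a * a)
      linear_combination hs
    · show (y : R × S).2 * (y : R × S).2 =
        (f s + (2 * (f s * j₄) - 2 * ((f s) ^ 2 * j₅))) * ((x : R × S).2 * (x : R × S).2)
      rw [hxeq, hyeq]
      have zjy : jy * jy = 0 := jmul hjy hjy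
      have z2 : jx * jx = 0 := jmul hjx hjx
      have zj₄ : j₄ * jx = 0 := jmul hj₄m hjx
      have zj₅ : j₅ * jx = 0 := jmul hj₅m hjx
      linear_combination (1 + 2 * j₄) * hfs + 2 * hj₄ - 2 * hj₅ + zjy +
        (-(f s) - 2 * (f s) * j₄ + 2 * (f s) ^ 2 * j₅) * z2 - 4 * ((f s) * (f a)) * zj₄ +
        4 * ((f s) ^ 2 * (f a)) * zj₅

lemma P1_amalg (hP1 : P1cond R) (hJJ : J * J = ⊥)
    (hstar : ∀ r ∈ IsLocalRing.maximalIdeal R, f r • J = (f r) ^ 2 • J) :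
    P1cond (amalgamation f J) := by
  intro x y
  rcases hP1 (x : R × S).1 (y : R × S).1 with ⟨⟨w, hw⟩, ⟨s, hs⟩⟩ | ⟨⟨w, hw⟩, ⟨s, hs⟩⟩
  · exact Or.inl (Ge_amalg hJJ hstar x y hw hs)
  · obtain ⟨⟨W, hW⟩, hT⟩ := Ge_amalg (w := w) (s := s) hJJ hstar y x (by linear_combination hw) hs
    exact Or.inr ⟨⟨W, by rwa [mul_comm y x] at hW⟩, hT⟩

lemma P2_amalg (hP2 : P2cond R) (hJJ : J * J = ⊥)
    (hstar : ∀ r ∈ IsLocalRing.maximalIdeal R, f r • J = (f r) ^ 2 • J) :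
    P2cond (amalgamation f J) := by
  intro x y T hxy hyT
  have jmul : ∀ {u v : S}, u ∈ J → v ∈ J → u * v = 0 := by
    intro u v hu hv
    have := Ideal.mul_mem_mul hu hv
    rwa [hJJ, Ideal.mem_bot] at this
  obtain ⟨jy, hjy, hyeq⟩ := amalg_snd_eq f J y
  have hab : (x : R × S).1 * (y : R × S).1 = 0 := by
    have := (amalg_eq_iff.1 hxy).1
    exact this
  rw [pow_two, pow_two] at hyT
  have hbT : (y : R × S).1 ^ 2 = (T : R × S).1 * (x : R × S).1 ^ 2 := by
    have h : (y : R × S).1 * (y : R × S).1 = (T : R × S).1 * ((x : R × S).1 * (x : R × S).1) :=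
      (amalg_eq_iff.1 hyT).1
    rw [pow_two, pow_two]
    exact h
  have hb2 : (y : R × S).1 ^ 2 = 0 := hP2 _ _ _ hab hbT
  rw [pow_two]
  apply amalg_ext f J
  · show (y : R × S).1 * (y : R × S).1 = 0
    rw [← pow_two]; exact hb2
  · show (y : R × S).2 * (y : R × S).2 = 0
    rw [hyeq]
    obtain ⟨j₄, hj₄m, hj₄⟩ := star_elem hstar (y : R × S).1 hjy
    have hfb2 : f (y : R × S).1 * f (y : R × S).1 = 0 := by
      rw [← map_mul, ← pow_two, hb2, map_zero]
    have zjy : jy * jy = 0 := jmul hjy hjy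
    linear_combination hfb2 + 2 * hj₄ + 2 * j₄ * hfb2 + zjy

end AmalgP

section MainThm

variable {R S : Type*} [CommRing R] [CommRing S] {f : R →+* S} {J : Ideal S}

lemma forward_JJ [IsLocalRing R] (hJf : (J : Set S) ⊆ Set.range f)
    (hJjac : J ≤ Ideal.jacobson (⊥ : Ideal S))
    (hG : IsGaussianRing (amalgamation f J)) : J * J = ⊥ := by
  haveI := amalg_isLocal f J hJjac
  have hP1 := P1_of_gaussian hG
  have hP2 := P2_of_gaussian hG
  have hsq : ∀ j ∈ J, j * j = 0 := by
    intro j hj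
    obtain ⟨r, hr⟩ := hJf hj
    have hxy : (amk f J 0 j hj) * (⟨(r, 0), ⟨-j, J.neg_mem hj, by rw [← hr]; ring⟩⟩ :
        amalgamation f J) = 0 := by
      apply amalg_ext f J
      · show 0 * r = 0; ring
      · show (f 0 + j) * 0 = 0; ring
    rcases hP1 (amk f J 0 j hj) ⟨(r, 0), ⟨-j, J.neg_mem hj, by rw [← hr]; ring⟩⟩ with
      ⟨_, ⟨T, hT⟩⟩ | ⟨_, ⟨T, hT⟩⟩
    · have h0 := hP2 _ _ T hxy hT
      rw [pow_two] at h0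
      have h1 : r * r = 0 := (amalg_eq_iff.1 h0).1
      have h2 : j * j = f (r * r) := by rw [map_mul, hr]
      rw [h2, h1, map_zero]
    · have h0 := hP2 _ _ T (by rw [mul_comm]; exact hxy) hT
      rw [pow_two] at h0
      have h2 : (f 0 + j) * (f 0 + j) = 0 := (amalg_eq_iff.1 h0).2
      simpa using h2
  rw [← le_bot_iff, Ideal.mul_le]
  intro j hj k hk
  rcases hP1 (amk f J 0 j hj) (amk f J 0 k hk) with ⟨⟨W, hW⟩, _⟩ | ⟨⟨W, hW⟩, _⟩
  · rw [pow_two] at hW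
    have h2 : (f 0 + j) * (f 0 + k) = ((W : R × S).2) * ((f 0 + j) * (f 0 + j)) :=
      (amalg_eq_iff.1 hW).2
    rw [Ideal.mem_bot]
    have hjj := hsq j hj
    simp only [map_zero, zero_add] at h2
    rw [h2, hjj, mul_zero]
  · rw [pow_two] at hW
    have h2 : (f 0 + j) * (f 0 + k) = ((W : R × S).2) * ((f 0 + k) * (f 0 + k)) :=
      (amalg_eq_iff.1 hW).2
    rw [Ideal.mem_bot]
    have hkk := hsq k hk
    simp only [map_zero, zero_add] at h2
    rw [h2, hkk, mul_zero]

lemma forward_star [IsLocalRing R] (hJjac : J ≤ Ideal.jacobson (⊥ : Ideal S))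
    (hJJ : J * J = ⊥)
    (hG : IsGaussianRing (amalgamation f J)) :
    ∀ r : R, f r • J = (f r) ^ 2 • J := by
  haveI := amalg_isLocal f J hJjac
  have hP1 := P1_of_gaussian hG
  have jmul : ∀ {u v : S}, u ∈ J → v ∈ J → u * v = 0 := by
    intro u v hu hv
    have := Ideal.mul_mem_mul hu hv
    rwa [hJJ, Ideal.mem_bot] at this
  intro r
  have key : ∀ j ∈ J, ∃ j' ∈ J, f r * j = (f r) ^ 2 * j' := by
    intro j hj
    rcases hP1 (amk f J r 0 J.zero_mem) (amk f J 0 j hj) with ⟨⟨W, hW⟩, _⟩ | ⟨⟨W, hW⟩, _⟩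
    · obtain ⟨jW, hjW, hWeq⟩ := amalg_snd_eq f J W
      rw [pow_two] at hW
      have h1 : r * 0 = (W : R × S).1 * (r * r) := (amalg_eq_iff.1 hW).1
      have h2 : (f r + 0) * (f 0 + j) = (W : R × S).2 * ((f r + 0) * (f r + 0)) :=
        (amalg_eq_iff.1 hW).2
      have hfW1 : f ((W : R × S).1) * (f r * f r) = 0 := by
        rw [← map_mul, ← map_mul, ← h1, mul_zero, map_zero]
      refine ⟨jW, hjW, ?_⟩
      simp only [map_zero, add_zero, zero_add] at h2
      rw [hWeq] at h2
      linear_combination h2 + hfW1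
    · have hyy : (amk f J 0 j hj) * (amk f J 0 j hj) = 0 := by
        apply amalg_ext f J
        · show 0 * 0 = 0; ring
        · show (f 0 + j) * (f 0 + j) = 0
          have h := jmul hj hj
          simp only [map_zero, zero_add]
          exact h
      rw [pow_two, hyy, mul_zero] at hW
      have h2 : (f r + 0) * (f 0 + j) = 0 := (amalg_eq_iff.1 hW).2
      refine ⟨0, J.zero_mem, ?_⟩
      simp only [map_zero, add_zero, zero_add] at h2
      rw [h2]; ring
  apply le_antisymm
  · intro z hz
    rw [← SetLike.mem_coe, Submodule.coe_pointwise_smul] at hz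
    obtain ⟨j, hj, rfl⟩ := Set.mem_smul_set.1 hz
    obtain ⟨j', hj', heq⟩ := key j hj
    rw [smul_eq_mul, heq, ← smul_eq_mul]
    exact Submodule.smul_mem_pointwise_smul _ _ _ hj'
  · intro z hz
    rw [← SetLike.mem_coe, Submodule.coe_pointwise_smul] at hz
    obtain ⟨j, hj, rfl⟩ := Set.mem_smul_set.1 hz
    have heq : (f r) ^ 2 • j = f r • (f r * j) := by
      rw [smul_eq_mul, smul_eq_mul]; ring
    rw [heq]
    exact Submodule.smul_mem_pointwise_smul _ _ _ (J.mul_mem_left _ hj)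

end MainThm

theorem stmt17 {R S : Type*} [CommRing R] [CommRing S] [IsLocalRing R]
    (f : R →+* S) (J : Ideal S) (hJ : J ≠ ⊤)
    (hJf : (J : Set S) ⊆ Set.range f) (hJjac : J ≤ Ideal.jacobson (⊥ : Ideal S)) :
    IsGaussianRing (amalgamation f J) ↔
      (IsGaussianRing R ∧ J * J = ⊥ ∧
        ∀ r ∈ IsLocalRing.maximalIdeal R, f r • J = (f r) ^ 2 • J) := by
  constructor
  · intro hG
    have hJJ := forward_JJ hJf hJjac hG
    exact ⟨isGaussian_of_surjective _ (amalgFst_surjective f J) hG, hJJ,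
      fun r _ => forward_star hJjac hJJ hG r⟩
  · rintro ⟨hR, hJJ, hstar⟩
    haveI := amalg_isLocal f J hJjac
    exact gaussian_of_P1_P2 (P1_amalg (P1_of_gaussian hR) hJJ hstar)
      (P2_amalg (P2_of_gaussian hR) hJJ hstar)
end

section
/- Let R and S be commutative rings with unity, f : R → S a ring homomorphism, and J a proper ideal of S with J ⊆ f(R). Then the amalgamation R ⋈^f J is an arithmetical ring if and only if R is an arithmetical ring, the localization J_m (of J as an R-module via f) is zero for every maximal ideal m of R containing f⁻¹(J), and the localization S_q is a chain ring for every maximal ideal q of S not containing J. -/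
open Pointwise

/-- A commutative ring is arithmetical if it is locally a chain ring, i.e. the ideals of
the localization at every maximal ideal are totally ordered by inclusion. -/
def IsArithmeticalRing (A : Type*) [CommRing A] : Prop :=
  ∀ (m : Ideal A) [m.IsMaximal],
    ∀ I I' : Ideal (Localization.AtPrime m), I ≤ I' ∨ I' ≤ I

namespace AmalgAux
variable {R S : Type*} [CommRing R] [CommRing S] (f : R →+* S) (J : Ideal S)
lemma mem_amalg {p : R × S} : p ∈ amalgamation f J ↔ p.2 - f p.1 ∈ J := by
  constructor
  · rintro ⟨j, hj, h⟩
    rw [h]; simpa using hj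
  · intro h
    exact ⟨p.2 - f p.1, h, by ring⟩
def aR (r : R) : amalgamation f J :=
  ⟨(r, f r), (mem_amalg f J).mpr (by simpa using J.zero_mem)⟩
def aJ (s : S) (hs : s ∈ J) : amalgamation f J :=
  ⟨(0, s), (mem_amalg f J).mpr (by simpa using hs)⟩
def aI (i : R) (hi : f i ∈ J) : amalgamation f J :=
  ⟨(i, 0), (mem_amalg f J).mpr (by simpa using J.neg_mem hi)⟩
def ρ : amalgamation f J →+* R := (RingHom.fst R S).comp (amalgamation f J).subtype
def σ : amalgamation f J →+* S := (RingHom.snd R S).comp (amalgamation f J).subtype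
@[simp] lemma ρ_apply (a : amalgamation f J) : ρ f J a = (a : R × S).1 := rfl
@[simp] lemma σ_apply (a : amalgamation f J) : σ f J a = (a : R × S).2 := rfl
lemma ρ_surjective : Function.Surjective (ρ f J) := fun r => ⟨aR f J r, rfl⟩

lemma comapQ_isMaximal (q : Ideal S) [hqm : q.IsMaximal] (hq : ¬ J ≤ q) :
    (Ideal.comap (σ f J) q).IsMaximal := by
  obtain ⟨j₀, hj₀, hj₀q⟩ := SetLike.not_le_iff_exists.mp hq
  rw [Ideal.isMaximal_iff]
  constructor
  · intro h
    exact hqm.ne_top ((Ideal.eq_top_iff_one q).mpr h)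
  · rintro I x hle hxq hxI
    obtain ⟨y, i, hi, hyx⟩ := hqm.exists_inv (show ((x : R × S).2 : S) ∉ q from hxq)
    obtain ⟨y', c', hc', h1'⟩ := hqm.exists_inv hj₀q
    set z : amalgamation f J := aJ f J (y' * j₀ * y) (J.mul_mem_right y (J.mul_mem_left y' hj₀))
    have hmem : (1 : amalgamation f J) - z * x ∈ Ideal.comap (σ f J) q := by
      show (((1 : amalgamation f J) - z * x : amalgamation f J) : R × S).2 ∈ q
      have h2 : (((1 : amalgamation f J) - z * x : amalgamation f J) : R × S).2
          = 1 - (y' * j₀ * y) * (x : R × S).2 := rfl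
      have h3 : 1 - (y' * j₀ * y) * (x : R × S).2 = c' + y' * j₀ * i := by
        linear_combination (-(y' * j₀)) * hyx - h1'
      rw [h2, h3]
      exact q.add_mem hc' (q.mul_mem_left _ hi)
    have h1 : (1 : amalgamation f J) = ((1 : amalgamation f J) - z * x) + z * x := by ring
    rw [h1]
    exact I.add_mem (hle hmem) (I.mul_mem_left z hxI)

lemma exists_q (M : Ideal (amalgamation f J)) [hMm : M.IsMaximal] {j₀ : S} (hj₀ : j₀ ∈ J)
    (hx : aJ f J j₀ hj₀ ∉ M) :
    ∃ q : Ideal S, q.IsMaximal ∧ ¬ J ≤ q ∧ M = Ideal.comap (σ f J) q := by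
  haveI hMp : M.IsPrime := hMm.isPrime
  have key : ∀ s t : S, (hs : s ∈ J) → (ht : t ∈ J) → aJ f J s hs * aJ f J t ht
      = aJ f J (s * t) (J.mul_mem_right t hs) := by
    intro s t hs ht
    apply Subtype.ext
    apply Prod.ext
    · show (0 : R) * 0 = 0; simp
    · rfl
  let q : Ideal S :=
  { carrier := {s | aJ f J (s * j₀) (J.mul_mem_left s hj₀) ∈ M}
    zero_mem' := by
      show aJ f J (0 * j₀) _ ∈ M
      have : aJ f J (0 * j₀) (J.mul_mem_left 0 hj₀) = 0 := by
        apply Subtype.ext; apply Prod.ext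
        · rfl
        · show (0 : S) * j₀ = 0; simp
      rw [this]; exact M.zero_mem
    add_mem' := by
      intro a b ha hb
      show aJ f J ((a + b) * j₀) _ ∈ M
      have : aJ f J ((a + b) * j₀) (J.mul_mem_left (a + b) hj₀)
          = aJ f J (a * j₀) (J.mul_mem_left a hj₀) + aJ f J (b * j₀) (J.mul_mem_left b hj₀) := by
        apply Subtype.ext; apply Prod.ext
        · show (0 : R) = 0 + 0; simp
        · show (a + b) * j₀ = a * j₀ + b * j₀; ring
      rw [this]; exact M.add_mem ha hb
    smul_mem' := by
      intro c s hs
      show aJ f J ((c * s) * j₀) _ ∈ M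
      have hmul : aJ f J ((c * s) * j₀) (J.mul_mem_left (c * s) hj₀) * aJ f J j₀ hj₀
          = aJ f J (c * j₀) (J.mul_mem_left c hj₀) * aJ f J (s * j₀) (J.mul_mem_left s hj₀) := by
        rw [key, key]
        apply Subtype.ext; apply Prod.ext
        · rfl
        · show (c * s) * j₀ * j₀ = (c * j₀) * (s * j₀); ring
      have : aJ f J ((c * s) * j₀) (J.mul_mem_left (c * s) hj₀) * aJ f J j₀ hj₀ ∈ M := by
        rw [hmul]; exact M.mul_mem_left _ hs
      rcases hMp.mem_or_mem this with h | h
      · exact h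
      · exact absurd h hx }
  have hqmem : ∀ s : S, s ∈ q ↔ aJ f J (s * j₀) (J.mul_mem_left s hj₀) ∈ M := fun s => Iff.rfl
  have hMq : M = Ideal.comap (σ f J) q := by
    ext a
    constructor
    · intro ha
      show (a : R × S).2 ∈ q
      rw [hqmem]
      have : aJ f J ((a : R × S).2 * j₀) (J.mul_mem_left _ hj₀) = a * aJ f J j₀ hj₀ := by
        apply Subtype.ext; apply Prod.ext
        · show (0 : R) = (a : R × S).1 * 0; simp
        · rfl
      rw [this]
      exact M.mul_mem_right _ ha
    · intro ha
      have ha' : aJ f J ((a : R × S).2 * j₀) (J.mul_mem_left _ hj₀) ∈ M := ha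
      have heq : a * aJ f J j₀ hj₀ = aJ f J ((a : R × S).2 * j₀) (J.mul_mem_left _ hj₀) := by
        apply Subtype.ext; apply Prod.ext
        · show (a : R × S).1 * 0 = (0 : R); simp
        · rfl
      rcases hMp.mem_or_mem (heq ▸ ha' : a * aJ f J j₀ hj₀ ∈ M) with h | h
      · exact h
      · exact absurd h hx
  have hqprime : q.IsPrime := by
    constructor
    · intro h
      have : (1 : S) ∈ q := h ▸ Submodule.mem_top
      rw [hqmem] at this
      have heq : aJ f J (1 * j₀) (J.mul_mem_left 1 hj₀) = aJ f J j₀ hj₀ := by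
        apply Subtype.ext; apply Prod.ext
        · rfl
        · show 1 * j₀ = j₀; simp
      exact hx (heq ▸ this)
    · intro s t hst
      rw [hqmem] at hst ⊢
      rw [show t ∈ q ↔ _ from hqmem t]
      have hmul : aJ f J ((s * t) * j₀) (J.mul_mem_left (s * t) hj₀) * aJ f J j₀ hj₀
          = aJ f J (s * j₀) (J.mul_mem_left s hj₀) * aJ f J (t * j₀) (J.mul_mem_left t hj₀) := by
        rw [key, key]
        apply Subtype.ext; apply Prod.ext
        · rfl
        · show (s * t) * j₀ * j₀ = (s * j₀) * (t * j₀); ring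
      have h1 : aJ f J (s * j₀) (J.mul_mem_left s hj₀) * aJ f J (t * j₀) (J.mul_mem_left t hj₀)
          ∈ M := by
        rw [← hmul]; exact M.mul_mem_right _ hst
      exact hMp.mem_or_mem h1
  haveI := hqprime
  have hj₀q : j₀ ∉ q := by
    intro h
    rw [hqmem] at h
    have heq : aJ f J (j₀ * j₀) (J.mul_mem_left j₀ hj₀) = aJ f J j₀ hj₀ * aJ f J j₀ hj₀ := by
      rw [key]
    rcases hMp.mem_or_mem (show aJ f J j₀ hj₀ * aJ f J j₀ hj₀ ∈ M from heq ▸ h) with h' | h' <;>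
      exact absurd h' hx
  have hqmax : q.IsMaximal := by
    rw [Ideal.isMaximal_iff]
    constructor
    · intro h
      rw [hqmem] at h
      have heq : aJ f J (1 * j₀) (J.mul_mem_left 1 hj₀) = aJ f J j₀ hj₀ := by
        apply Subtype.ext; apply Prod.ext
        · rfl
        · show 1 * j₀ = j₀; simp
      exact hx (heq ▸ h)
    · rintro I x hle hxq hxI
      have hxM : aJ f J (x * j₀) (J.mul_mem_left x hj₀) ∉ M := fun h => hxq ((hqmem x).mpr h)
      obtain ⟨y, i, hi, hyx⟩ := hMm.exists_inv hxM
      have h2 : (y : R × S).2 * (x * j₀) + (i : R × S).2 = 1 := by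
        have := congrArg (fun w : amalgamation f J => (w : R × S).2) hyx
        simpa [aJ] using this
      have hi2 : (i : R × S).2 ∈ q := by rw [hMq] at hi; exact hi
      have h1 : (1 : S) = ((y : R × S).2 * j₀) * x + (i : R × S).2 := by
        rw [← h2]; ring
      rw [h1]
      exact I.add_mem (I.mul_mem_left _ hxI) (hle hi2)
  exact ⟨q, hqmax, fun h => hj₀q (h hj₀), hMq⟩


lemma exists_p (M : Ideal (amalgamation f J)) [hMm : M.IsMaximal]
    (hall : ∀ s (hs : s ∈ J), aJ f J s hs ∈ M) :
    ∃ p : Ideal R, p.IsMaximal ∧ M = Ideal.comap (ρ f J) p := by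
  set p := M.map (ρ f J) with hp
  have hsurj := ρ_surjective f J
  have hker : Ideal.comap (ρ f J) ⊥ ≤ M := by
    intro a ha
    have h1 : (a : R × S).1 = 0 := ha
    have h2 : (a : R × S).2 ∈ J := by
      obtain ⟨j, hj, hh⟩ := a.2
      rw [hh, h1]
      simpa using hj
    have heq : a = aJ f J _ h2 := Subtype.ext (Prod.ext h1 rfl)
    rw [heq]
    exact hall _ _
  have hcm : Ideal.comap (ρ f J) p = M := by
    rw [hp, Ideal.comap_map_of_surjective _ hsurj, sup_eq_left.mpr hker]
  have hpm : p.IsMaximal := by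
    constructor
    constructor
    · intro h
      rw [h, Ideal.comap_top] at hcm
      exact hMm.ne_top hcm.symm
    · intro b hb
      have hbne : Ideal.comap (ρ f J) b ≠ ⊤ ∨ b = ⊤ := by
        by_cases hb' : b = ⊤
        · exact Or.inr hb'
        · left
          intro h
          have : (1 : amalgamation f J) ∈ Ideal.comap (ρ f J) b := h ▸ Submodule.mem_top
          have h1 : (1 : R) ∈ b := this
          exact hb' ((Ideal.eq_top_iff_one b).mpr h1)
      rcases hbne with hbne | hbt
      · exfalso
        have hle : M ≤ Ideal.comap (ρ f J) b := hcm ▸ Ideal.comap_mono hb.le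
        have := hMm.eq_of_le hbne hle
        have hbb : b = p := by
          rw [hp, ← Ideal.map_comap_of_surjective _ hsurj b, ← this]
        exact hb.ne hbb.symm
      · exact hbt
  exact ⟨p, hpm, hcm.symm⟩


lemma forward_two (hJf : (J : Set S) ⊆ Set.range f)
    (m : Ideal R) [hmm : m.IsMaximal] (hm : Ideal.comap f J ≤ m)
    (hch : ∀ I I' : Ideal (Localization.AtPrime (Ideal.comap (ρ f J) m)), I ≤ I' ∨ I' ≤ I) :
    ∀ j ∈ J, ∃ u, u ∉ m ∧ f u * j = 0 := by
  intro j hj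
  set A := amalgamation f J
  set P := Ideal.comap (ρ f J) m with hPd
  haveI : P.IsPrime := Ideal.comap_isPrime _ m
  obtain ⟨i, fi⟩ := hJf hj
  have him : i ∈ m := hm (show f i ∈ J by rw [fi]; exact hj)
  set L := Localization.AtPrime P
  set x : A := aJ f J j hj with hxd
  set y : A := aI f J i (by rw [fi]; exact hj) with hyd
  set X : L := algebraMap A L x with hX
  set Y : L := algebraMap A L y with hY
  rcases hch (Ideal.span {X}) (Ideal.span {Y}) with hc | hc
  · -- X ∈ span {Y}
    have hXY : X ∈ Ideal.span ({Y} : Set L) := hc (Ideal.subset_span rfl)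
    obtain ⟨z, hz⟩ := Ideal.mem_span_singleton'.mp hXY
    obtain ⟨a, t, hmk⟩ := IsLocalization.exists_mk'_eq P.primeCompl z
    have h2 : algebraMap A L (x * (t : A)) = algebraMap A L (a * y) := by
      calc algebraMap A L (x * (t : A)) = X * algebraMap A L (t : A) := by rw [map_mul]
      _ = (IsLocalization.mk' L a t * algebraMap A L (t : A)) * Y := by
          rw [← hz, hmk]; ring
      _ = algebraMap A L a * Y := by rw [IsLocalization.mk'_spec]
      _ = algebraMap A L (a * y) := by rw [map_mul]
    obtain ⟨c, hcc⟩ := (IsLocalization.eq_iff_exists P.primeCompl L).mp h2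
    have hsnd := congrArg (fun w : A => (w : R × S).2) hcc
    have hsnd' : ((c : A) : R × S).2 * (j * ((t : A) : R × S).2)
        = ((c : A) : R × S).2 * ((a : R × S).2 * 0) := hsnd
    have hw : (((c : A) : R × S).2 * ((t : A) : R × S).2) * j = 0 := by
      rw [mul_zero, mul_zero] at hsnd'
      calc (((c : A) : R × S).2 * ((t : A) : R × S).2) * j
          = ((c : A) : R × S).2 * (j * ((t : A) : R × S).2) := by ring
      _ = 0 := hsnd'
    set d : A := (c : A) * (t : A) with hdd
    have hd1 : (d : R × S).1 ∉ m := by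
      intro h
      have : d ∈ P := h
      exact (P.primeCompl.mul_mem c.2 t.2 : d ∈ P.primeCompl) this
    obtain ⟨j', hj', hdw⟩ := d.2
    obtain ⟨i', fi'⟩ := hJf hj'
    have hi'm : i' ∈ m := hm (show f i' ∈ J by rw [fi']; exact hj')
    refine ⟨(d : R × S).1 + i', fun h => hd1 ?_, ?_⟩
    · have : (d : R × S).1 = ((d : R × S).1 + i') - i' := by ring
      rw [this]
      exact m.sub_mem h hi'm
    · have hweq : (d : R × S).2 = f ((d : R × S).1) + j' := hdw
      rw [map_add, fi']
      rw [← hweq]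
      have : (d : R × S).2 = ((c : A) : R × S).2 * ((t : A) : R × S).2 := rfl
      rw [this]
      exact hw
  · -- Y ∈ span {X}
    have hYX : Y ∈ Ideal.span ({X} : Set L) := hc (Ideal.subset_span rfl)
    obtain ⟨z, hz⟩ := Ideal.mem_span_singleton'.mp hYX
    obtain ⟨a, t, hmk⟩ := IsLocalization.exists_mk'_eq P.primeCompl z
    have h2 : algebraMap A L (y * (t : A)) = algebraMap A L (a * x) := by
      calc algebraMap A L (y * (t : A)) = Y * algebraMap A L (t : A) := by rw [map_mul]
      _ = (IsLocalization.mk' L a t * algebraMap A L (t : A)) * X := by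
          rw [← hz, hmk]; ring
      _ = algebraMap A L a * X := by rw [IsLocalization.mk'_spec]
      _ = algebraMap A L (a * x) := by rw [map_mul]
    obtain ⟨c, hcc⟩ := (IsLocalization.eq_iff_exists P.primeCompl L).mp h2
    have hfst := congrArg (fun w : A => (w : R × S).1) hcc
    have hfst' : ((c : A) : R × S).1 * (i * ((t : A) : R × S).1)
        = ((c : A) : R × S).1 * ((a : R × S).1 * 0) := hfst
    set d : A := (c : A) * (t : A) with hdd
    have hd1 : (d : R × S).1 ∉ m := by
      intro h
      have : d ∈ P := h
      exact (P.primeCompl.mul_mem c.2 t.2 : d ∈ P.primeCompl) this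
    refine ⟨(d : R × S).1, hd1, ?_⟩
    have hui : (d : R × S).1 * i = 0 := by
      rw [mul_zero, mul_zero] at hfst'
      have : (d : R × S).1 = ((c : A) : R × S).1 * ((t : A) : R × S).1 := rfl
      rw [this]
      calc ((c : A) : R × S).1 * ((t : A) : R × S).1 * i
          = ((c : A) : R × S).1 * (i * ((t : A) : R × S).1) := by ring
      _ = 0 := hfst'
    rw [← fi, ← map_mul, hui, map_zero]


lemma localRingHom_surj (p : Ideal R) [p.IsPrime] :
    Function.Surjective (Localization.localRingHom (Ideal.comap (ρ f J) p) p (ρ f J) rfl) := by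
  intro z
  obtain ⟨r, u, hz⟩ := IsLocalization.exists_mk'_eq p.primeCompl z
  refine ⟨IsLocalization.mk' _ (aR f J r)
    (⟨aR f J (u : R), u.2⟩ : (Ideal.comap (ρ f J) p).primeCompl), ?_⟩
  rw [Localization.localRingHom_mk', ← hz]
  rfl

lemma subsingleton_iff_loc (m : Ideal R) [m.IsPrime] :
    (letI : Module R J := Module.compHom J f
     Subsingleton (LocalizedModule m.primeCompl J)) ↔
    ∀ j ∈ J, ∃ u, u ∉ m ∧ f u * j = 0 := by
  letI : Module R J := Module.compHom J f
  have hsmul : ∀ (u : R) (jj : J), ((u • jj : J) : S) = f u * (jj : S) := fun _ _ => rfl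
  constructor
  · intro hsub j hj
    have h0 : (LocalizedModule.mk (⟨j, hj⟩ : J) (1 : m.primeCompl) : LocalizedModule m.primeCompl J)
        = LocalizedModule.mk 0 1 := Subsingleton.elim _ _
    obtain ⟨u, hu⟩ := LocalizedModule.mk_eq.mp h0
    rw [one_smul, one_smul, smul_zero, Submonoid.smul_def] at hu
    refine ⟨(u : R), u.2, ?_⟩
    have hval := congrArg (Subtype.val : J → S) hu
    rw [hsmul] at hval
    simpa using hval
  · intro H
    refine ⟨fun z z' => ?_⟩
    have key : ∀ z : LocalizedModule m.primeCompl J, z = LocalizedModule.mk 0 1 := by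
      intro z
      induction z using LocalizedModule.induction_on with
      | _ jj s =>
        obtain ⟨u, hu, hfu⟩ := H (jj : S) jj.2
        rw [LocalizedModule.mk_eq]
        refine ⟨⟨u, hu⟩, ?_⟩
        rw [one_smul, smul_zero, smul_zero, Submonoid.smul_def]
        apply Subtype.ext
        rw [hsmul]
        simpa using hfu
    rw [key z, key z']

lemma equivQ (q : Ideal S) [q.IsPrime] {j₀ : S} (hj₀ : j₀ ∈ J) (hj₀q : j₀ ∉ q) :
    Nonempty (Localization.AtPrime (Ideal.comap (σ f J) q) ≃+* Localization.AtPrime q) := by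
  set A := amalgamation f J
  set Q := Ideal.comap (σ f J) q with hQ
  letI g : A →+* Localization.AtPrime q :=
    (algebraMap S (Localization.AtPrime q)).comp (σ f J)
  letI : Algebra A (Localization.AtPrime q) := g.toAlgebra
  have halg : ∀ a : A, algebraMap A (Localization.AtPrime q) a
      = algebraMap S (Localization.AtPrime q) ((a : R × S).2) := fun _ => rfl
  haveI : IsLocalization Q.primeCompl (Localization.AtPrime q) := by
    refine ⟨⟨?_, ?_, ?_⟩⟩
    · intro y
      rw [halg]
      exact IsLocalization.map_units (Localization.AtPrime q) (⟨_, y.2⟩ : q.primeCompl)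
    · intro z
      obtain ⟨s, u, hz⟩ := IsLocalization.exists_mk'_eq q.primeCompl z
      have hu : (u : S) * j₀ ∉ q := fun h =>
        ((Ideal.IsPrime.mem_or_mem inferInstance h).elim u.2 hj₀q)
      refine ⟨⟨aJ f J (s * j₀) (J.mul_mem_left _ hj₀),
        ⟨aJ f J ((u : S) * j₀) (J.mul_mem_left _ hj₀), hu⟩⟩, ?_⟩
      rw [halg, halg]
      show z * algebraMap S _ ((u : S) * j₀) = algebraMap S _ (s * j₀)
      rw [map_mul, map_mul, ← mul_assoc, ← hz, IsLocalization.mk'_spec]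
    · intro x y hxy
      rw [halg, halg] at hxy
      obtain ⟨c, hc⟩ := (IsLocalization.eq_iff_exists q.primeCompl _).mp hxy
      have hcj : (c : S) * j₀ ∉ q := fun h =>
        ((Ideal.IsPrime.mem_or_mem inferInstance h).elim c.2 hj₀q)
      refine ⟨⟨aJ f J ((c : S) * j₀) (J.mul_mem_left _ hj₀), hcj⟩, ?_⟩
      apply Subtype.ext
      apply Prod.ext
      · show 0 * (x : R × S).1 = 0 * (y : R × S).1
        simp
      · show (c : S) * j₀ * (x : R × S).2 = (c : S) * j₀ * (y : R × S).2
        calc (c : S) * j₀ * (x : R × S).2 = ((c : S) * (x : R × S).2) * j₀ := by ring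
        _ = ((c : S) * (y : R × S).2) * j₀ := by rw [hc]
        _ = (c : S) * j₀ * (y : R × S).2 := by ring
  exact ⟨(IsLocalization.algEquiv Q.primeCompl
    (Localization.AtPrime Q) (Localization.AtPrime q)).toRingEquiv⟩

lemma equivP (p : Ideal R) [p.IsPrime]
    (H : ∀ j ∈ J, ∃ c : amalgamation f J, (c : R × S).1 ∉ p ∧ (c : R × S).2 * j = 0) :
    Nonempty (Localization.AtPrime (Ideal.comap (ρ f J) p) ≃+* Localization.AtPrime p) := by
  set A := amalgamation f J
  set P := Ideal.comap (ρ f J) p with hP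
  letI g : A →+* Localization.AtPrime p :=
    (algebraMap R (Localization.AtPrime p)).comp (ρ f J)
  letI : Algebra A (Localization.AtPrime p) := g.toAlgebra
  have halg : ∀ a : A, algebraMap A (Localization.AtPrime p) a
      = algebraMap R (Localization.AtPrime p) ((a : R × S).1) := fun _ => rfl
  haveI : IsLocalization P.primeCompl (Localization.AtPrime p) := by
    refine ⟨⟨?_, ?_, ?_⟩⟩
    · intro y
      rw [halg]
      exact IsLocalization.map_units (Localization.AtPrime p) (⟨_, y.2⟩ : p.primeCompl)
    · intro z
      obtain ⟨r, u, hz⟩ := IsLocalization.exists_mk'_eq p.primeCompl z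
      refine ⟨⟨aR f J r, ⟨aR f J (u : R), u.2⟩⟩, ?_⟩
      rw [halg, halg]
      show z * algebraMap R _ (u : R) = algebraMap R _ r
      rw [← hz, IsLocalization.mk'_spec]
    · intro x y hxy
      rw [halg, halg] at hxy
      obtain ⟨u, hu⟩ := (IsLocalization.eq_iff_exists p.primeCompl _).mp hxy
      obtain ⟨j, hj, hd⟩ := (x - y).2
      have hd' : (x : R × S).2 - (y : R × S).2 = f ((x : R × S).1 - (y : R × S).1) + j := hd
      obtain ⟨c, hc1, hc2⟩ := H j hj
      have hmem : ((aR f J (u : R) * c : A) : R × S).1 ∉ p := fun h =>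
        ((Ideal.IsPrime.mem_or_mem inferInstance h).elim u.2 hc1)
      refine ⟨⟨aR f J (u : R) * c, hmem⟩, ?_⟩
      apply Subtype.ext
      apply Prod.ext
      · show (u : R) * (c : R × S).1 * (x : R × S).1 = (u : R) * (c : R × S).1 * (y : R × S).1
        calc (u : R) * (c : R × S).1 * (x : R × S).1
            = ((u : R) * (x : R × S).1) * (c : R × S).1 := by ring
        _ = ((u : R) * (y : R × S).1) * (c : R × S).1 := by rw [hu]
        _ = (u : R) * (c : R × S).1 * (y : R × S).1 := by ring
      · show f (u : R) * (c : R × S).2 * (x : R × S).2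
            = f (u : R) * (c : R × S).2 * (y : R × S).2
        rw [← sub_eq_zero, ← mul_sub, hd']
        have hu0 : (u : R) * ((x : R × S).1 - (y : R × S).1) = 0 := by
          rw [mul_sub, hu, sub_self]
        calc f (u : R) * (c : R × S).2 * (f ((x : R × S).1 - (y : R × S).1) + j)
            = (c : R × S).2 * (f (u : R) * f ((x : R × S).1 - (y : R × S).1))
              + f (u : R) * ((c : R × S).2 * j) := by ring
        _ = 0 := by rw [← map_mul, hu0, map_zero, hc2, mul_zero, mul_zero, add_zero]
  exact ⟨(IsLocalization.algEquiv P.primeCompl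
    (Localization.AtPrime P) (Localization.AtPrime p)).toRingEquiv⟩


lemma chain_of_surjective {A B : Type*} [CommRing A] [CommRing B] (h : A →+* B)
    (hs : Function.Surjective h) (H : ∀ I I' : Ideal A, I ≤ I' ∨ I' ≤ I) :
    ∀ I I' : Ideal B, I ≤ I' ∨ I' ≤ I := by
  intro I I'
  rcases H (I.comap h) (I'.comap h) with h1 | h1
  · left
    rw [← Ideal.map_comap_of_surjective h hs I, ← Ideal.map_comap_of_surjective h hs I']
    exact Ideal.map_mono h1
  · right
    rw [← Ideal.map_comap_of_surjective h hs I, ← Ideal.map_comap_of_surjective h hs I']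
    exact Ideal.map_mono h1

end AmalgAux

set_option synthInstance.maxHeartbeats 800000
set_option maxHeartbeats 1600000

theorem stmt19 {R S : Type*} [CommRing R] [CommRing S] (f : R →+* S) (J : Ideal S)
    (hJ : J ≠ ⊤) (hJf : (J : Set S) ⊆ Set.range f) :
    IsArithmeticalRing (amalgamation f J) ↔
      (IsArithmeticalRing R ∧
        (∀ (m : Ideal R) [m.IsMaximal], Ideal.comap f J ≤ m →
          letI : Module R J := Module.compHom J f
          Subsingleton (LocalizedModule m.primeCompl J)) ∧
        (∀ (q : Ideal S) [q.IsMaximal], ¬ J ≤ q →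
          ∀ I I' : Ideal (Localization.AtPrime q), I ≤ I' ∨ I' ≤ I)) := by
  classical
  constructor
  · intro hA
    refine ⟨?_, ?_, ?_⟩
    · intro p inst
      haveI : (Ideal.comap (AmalgAux.ρ f J) p).IsMaximal :=
        Ideal.comap_isMaximal_of_surjective _ (AmalgAux.ρ_surjective f J)
      exact AmalgAux.chain_of_surjective _ (AmalgAux.localRingHom_surj f J p) (hA _)
    · intro m inst hm
      haveI : (Ideal.comap (AmalgAux.ρ f J) m).IsMaximal :=
        Ideal.comap_isMaximal_of_surjective _ (AmalgAux.ρ_surjective f J)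
      exact (AmalgAux.subsingleton_iff_loc f J m).mpr (AmalgAux.forward_two f J hJf m hm (hA _))
    · intro q inst hq
      haveI := AmalgAux.comapQ_isMaximal f J q hq
      obtain ⟨j₀, hj₀, hj₀q⟩ := SetLike.not_le_iff_exists.mp hq
      obtain ⟨e⟩ := AmalgAux.equivQ f J q hj₀ hj₀q
      exact AmalgAux.chain_of_surjective e.toRingHom e.surjective (hA _)
  · rintro ⟨h1, h2, h3⟩
    intro M instM
    by_cases hall : ∀ s (hs : s ∈ J), AmalgAux.aJ f J s hs ∈ M
    · obtain ⟨p, hpmax, rfl⟩ := AmalgAux.exists_p f J M hall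
      haveI := hpmax
      have H : ∀ j ∈ J, ∃ c : amalgamation f J,
          (c : R × S).1 ∉ p ∧ (c : R × S).2 * j = 0 := by
        by_cases hIp : Ideal.comap f J ≤ p
        · intro j hj
          obtain ⟨u, hu, hfu⟩ := (AmalgAux.subsingleton_iff_loc f J p).mp (h2 p hIp) j hj
          exact ⟨AmalgAux.aR f J u, hu, hfu⟩
        · obtain ⟨i, hiJ, hip⟩ := SetLike.not_le_iff_exists.mp hIp
          intro j hj
          refine ⟨AmalgAux.aI f J i hiJ, hip, ?_⟩
          show (0 : S) * j = 0
          simp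
      obtain ⟨e⟩ := AmalgAux.equivP f J p H
      exact AmalgAux.chain_of_surjective e.symm.toRingHom e.symm.surjective (h1 p)
    · simp only [not_forall] at hall
      obtain ⟨j₀, hj₀, hx⟩ := hall
      obtain ⟨q, hqmax, hq, rfl⟩ := AmalgAux.exists_q f J M hj₀ hx
      haveI := hqmax
      obtain ⟨j₁, hj₁, hj₁q⟩ := SetLike.not_le_iff_exists.mp hq
      obtain ⟨e⟩ := AmalgAux.equivQ f J q hj₁ hj₁q
      exact AmalgAux.chain_of_surjective e.symm.toRingHom e.symm.surjective (h3 q hq)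
end
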